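/- Let κ > 0, let c = (c_1,…,c_q) ∈ ℝ^q, and let c′ = (c′_1,…,c′_q) := π_κ(c) be its metric projection onto κ·P^{q−1}. Suppose c′ belongs to relint(κ·τ_J) for an ordered partition J = (J_1,…,J_s) of {1,…,q}. Then there exist real numbers t_1 ≤ t_2 ≤ … ≤ t_s such that c_j − c′_j = t_k for every k ∈ {1,…,s} and every j ∈ J_k. -/

import Mathlib

open Set Pointwise

noncomputable section

/-- The vertex `P_ρ` of the permutohedron: the point whose `ρ(k)`-th coordinate is
`k − (q+1)/2` (with `k` running through `1,…,q`, here 0-indexed as `Fin q`). -/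
def vertexPoint (q : ℕ) (ρ : Equiv.Perm (Fin q)) : EuclideanSpace ℝ (Fin q) :=
  WithLp.toLp 2 (fun i => ((ρ.symm i : ℕ) + 1 : ℝ) - ((q : ℝ) + 1) / 2)

/-- The permutohedron `P^{q−1} ⊂ ℝ^q`: the convex hull of the points `P_ρ`. -/
def permutohedron (q : ℕ) : Set (EuclideanSpace ℝ (Fin q)) :=
  convexHull ℝ (Set.range (vertexPoint q))

/-- An ordered partition `J = (J_1,…,J_s)` of `{1,…,q}` into `s` nonempty subsets. -/
structure OrderedPartition (q s : ℕ) where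
  blocks : Fin s → Finset (Fin q)
  nonempty : ∀ k, (blocks k).Nonempty
  disjoint : ∀ k l, k ≠ l → Disjoint (blocks k) (blocks l)
  covers : ∀ j : Fin q, ∃ k, j ∈ blocks k

/-- `cumCard J n = r_n`, the total cardinality of the first `n` blocks. -/
def cumCard {q s : ℕ} (J : OrderedPartition q s) (n : ℕ) : ℕ :=
  ∑ i ∈ Finset.univ.filter (fun i : Fin s => (i : ℕ) < n), (J.blocks i).card

/-- A permutation `π` is compatible with the ordered partition `J` if it maps the
`k`-th consecutive block `{r_{k−1}+1,…,r_k}` (0-indexed: `[r_{k−1}, r_k)`) onto `J_k`;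
these are exactly the permutations `σρ` with `σ` in the Young subgroup. -/
def compatiblePerm {q s : ℕ} (J : OrderedPartition q s) (π : Equiv.Perm (Fin q)) : Prop :=
  ∀ (k : Fin s) (i : Fin q),
    π i ∈ J.blocks k ↔ cumCard J (k : ℕ) ≤ (i : ℕ) ∧ (i : ℕ) < cumCard J ((k : ℕ) + 1)

/-- The face `τ_J` of the permutohedron corresponding to the ordered partition `J`. -/
def face (q s : ℕ) (J : OrderedPartition q s) : Set (EuclideanSpace ℝ (Fin q)) :=
  convexHull ℝ {x | ∃ π : Equiv.Perm (Fin q), compatiblePerm J π ∧ x = vertexPoint q π}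

/-- The metric projection onto a set `K`: a point of `K` at minimal distance
(unique when `K` is compact, convex and nonempty in Euclidean space). -/
def metricProj {E : Type*} [MetricSpace E] [Nonempty E] (K : Set E) (c : E) : E :=
  Classical.epsilon fun y => y ∈ K ∧ ∀ z ∈ K, dist c y ≤ dist c z


lemma cumCard_mono {q s : ℕ} (J : OrderedPartition q s) : Monotone (cumCard J) := by
  intro m n hmn
  apply Finset.sum_le_sum_of_subset
  intro i hi
  simp only [Finset.mem_filter, Finset.mem_univ, true_and] at hi ⊢
  omega

lemma range_eq {q s : ℕ} (J : OrderedPartition q s) {k l : Fin s} {i : Fin q}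
    (hk : cumCard J (k : ℕ) ≤ (i : ℕ) ∧ (i : ℕ) < cumCard J ((k : ℕ) + 1))
    (hl : cumCard J (l : ℕ) ≤ (i : ℕ) ∧ (i : ℕ) < cumCard J ((l : ℕ) + 1)) : k = l := by
  by_contra hne
  rcases lt_or_gt_of_ne hne with h | h
  · have : cumCard J ((k : ℕ) + 1) ≤ cumCard J (l : ℕ) := cumCard_mono J (by exact_mod_cast h)
    omega
  · have : cumCard J ((l : ℕ) + 1) ≤ cumCard J (k : ℕ) := cumCard_mono J (by exact_mod_cast h)
    omega

lemma vertexPoint_swap {q : ℕ} (π : Equiv.Perm (Fin q)) (a b : Fin q) (hab : a ≠ b) :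
    vertexPoint q ((Equiv.swap a b).trans π) = vertexPoint q π +
      (((b : ℕ) : ℝ) - ((a : ℕ) : ℝ)) •
        (EuclideanSpace.single (π a) (1:ℝ) - EuclideanSpace.single (π b) 1) := by
  ext i
  have hsymm : ((Equiv.swap a b).trans π).symm i = Equiv.swap a b (π.symm i) := by
    simp [Equiv.symm_trans_apply, Equiv.symm_swap]
  have hia : (i = π a) ↔ (π.symm i = a) :=
    ⟨fun h => by simp [h], fun h => by rw [← h]; simp⟩
  have hib : (i = π b) ↔ (π.symm i = b) :=
    ⟨fun h => by simp [h], fun h => by rw [← h]; simp⟩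
  simp only [PiLp.add_apply, PiLp.smul_apply, PiLp.sub_apply, EuclideanSpace.single_apply,
    vertexPoint, PiLp.toLp_apply, hsymm, smul_eq_mul]
  by_cases h1 : π.symm i = a
  · have h2 : π.symm i ≠ b := by rw [h1]; exact hab
    rw [h1, Equiv.swap_apply_left]
    rw [if_pos (hia.mpr h1), if_neg (fun h => h2 (hib.mp h))]
    ring
  · by_cases h2 : π.symm i = b
    · rw [h2, Equiv.swap_apply_right]
      rw [if_neg (fun h => h1 (hia.mp h)), if_pos (hib.mpr h2)]
      ring
    · rw [Equiv.swap_apply_of_ne_of_ne h1 h2]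
      rw [if_neg (fun h => h1 (hia.mp h)), if_neg (fun h => h2 (hib.mp h))]
      ring

lemma swap_compatible {q s : ℕ} (J : OrderedPartition q s) (π : Equiv.Perm (Fin q))
    (hπ : compatiblePerm J π) (k₀ : Fin s) (a b : Fin q)
    (ha : cumCard J (k₀ : ℕ) ≤ (a : ℕ) ∧ (a : ℕ) < cumCard J ((k₀ : ℕ) + 1))
    (hb : cumCard J (k₀ : ℕ) ≤ (b : ℕ) ∧ (b : ℕ) < cumCard J ((k₀ : ℕ) + 1)) :
    compatiblePerm J ((Equiv.swap a b).trans π) := by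
  intro k i
  simp only [Equiv.trans_apply]
  by_cases h1 : i = a
  · subst h1
    rw [Equiv.swap_apply_left, hπ k b]
    constructor
    · intro h; rwa [range_eq J hb h] at ha
    · intro h; rwa [range_eq J ha h] at hb
  · by_cases h2 : i = b
    · subst h2
      rw [Equiv.swap_apply_right, hπ k a]
      constructor
      · intro h; rwa [range_eq J ha h] at hb
      · intro h; rwa [range_eq J hb h] at ha
    · rw [Equiv.swap_apply_of_ne_of_ne h1 h2]
      exact hπ k i

lemma inner_single_diff {q : ℕ} (v : EuclideanSpace ℝ (Fin q)) (j j' : Fin q) :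
    (inner ℝ v (EuclideanSpace.single j (1:ℝ) - EuclideanSpace.single j' 1) : ℝ) = v j - v j' := by
  rw [inner_sub_right, EuclideanSpace.inner_single_right, EuclideanSpace.inner_single_right]
  simp


lemma proj_inner_le {q : ℕ} (K : Set (EuclideanSpace ℝ (Fin q))) (c c' : EuclideanSpace ℝ (Fin q))
    (hKconv : Convex ℝ K)
    (hspec : c' ∈ K ∧ ∀ z ∈ K, dist c c' ≤ dist c z) :
    ∀ y ∈ K, (inner ℝ (c - c') (y - c') : ℝ) ≤ 0 := by
  intro w hw
  set x := c - c' with hx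
  set v := w - c' with hv
  set I : ℝ := inner ℝ x v with hI
  by_contra hIpos
  push_neg at hIpos
  have hB : (0:ℝ) < ‖v‖^2 := by
    have hv0 : v ≠ 0 := by
      intro h
      rw [hI, h, inner_zero_right] at hIpos
      exact lt_irrefl _ hIpos
    have := norm_pos_iff.mpr hv0
    positivity
  set θ := min 1 (I / ‖v‖^2) with hθ
  have hθ0 : 0 < θ := lt_min one_pos (div_pos hIpos hB)
  have hθ1 : θ ≤ 1 := min_le_left _ _
  have hz : c' + θ • v ∈ K := by
    have h := hKconv hspec.1 hw (by linarith : (0:ℝ) ≤ 1-θ) hθ0.le (by ring)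
    have heq : (1-θ) • c' + θ • w = c' + θ • v := by
      rw [hv, smul_sub, sub_smul, one_smul]; abel
    rwa [heq] at h
  have hle : ‖x‖ ≤ ‖x - θ • v‖ := by
    have h := hspec.2 _ hz
    rw [dist_eq_norm, dist_eq_norm] at h
    have heq : c - (c' + θ • v) = x - θ • v := by rw [hx]; abel
    rwa [heq] at h
  have hsq : ‖x‖^2 ≤ ‖x - θ•v‖^2 := pow_le_pow_left₀ (norm_nonneg x) hle 2
  have hexpand : ‖x - θ•v‖^2 = ‖x‖^2 - 2*(θ*I) + θ^2*‖v‖^2 := by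
    rw [norm_sub_sq_real, real_inner_smul_right, norm_smul, mul_pow, Real.norm_eq_abs, sq_abs, ← hI]
  have h2 : 2*I ≤ θ*‖v‖^2 := by nlinarith
  have h3 : θ*‖v‖^2 ≤ I := by
    calc θ*‖v‖^2 ≤ (I/‖v‖^2)*‖v‖^2 := mul_le_mul_of_nonneg_right (min_le_right _ _) hB.le
    _ = I := div_mul_cancel₀ _ (ne_of_gt hB)
  linarith

set_option maxHeartbeats 1000000 in
/-- if the metric projection `c′ = π_κ(c)` of `c` onto `κ·P^{q−1}` lies in
the relative interior of `κ·τ_J`, then there are reals `t_1 ≤ … ≤ t_s` with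
`c_j − c′_j = t_k` for every `j ∈ J_k`. -/
theorem metricProj_differences_monotone (q s : ℕ) (hq : 1 ≤ q)
    (κ : ℝ) (hκ : 0 < κ) (J : OrderedPartition q s)
    (c c' : EuclideanSpace ℝ (Fin q))
    (hc' : c' = metricProj (κ • permutohedron q) c)
    (hrel : c' ∈ intrinsicInterior ℝ (κ • face q s J)) :
    ∃ t : Fin s → ℝ, Monotone t ∧ ∀ k : Fin s, ∀ j ∈ J.blocks k, c j - c' j = t k := by
  classical
  set K : Set (EuclideanSpace ℝ (Fin q)) := κ • permutohedron q with hK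
  set A : Set (EuclideanSpace ℝ (Fin q)) := κ • face q s J with hA
  have hPconv : Convex ℝ (permutohedron q) := convex_convexHull ℝ _
  have hKconv : Convex ℝ K := hPconv.smul κ
  have hPne : (permutohedron q).Nonempty := ⟨vertexPoint q 1, subset_convexHull ℝ _ ⟨1, rfl⟩⟩
  have hKne : K.Nonempty := hPne.smul_set
  have hKcpt : IsCompact K := ((Set.finite_range (vertexPoint q)).isCompact_convexHull ℝ).smul κ
  have hfacesub : face q s J ⊆ permutohedron q :=
    convexHull_mono (by rintro x ⟨π, _, rfl⟩; exact ⟨π, rfl⟩)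
  have hAK : A ⊆ K := Set.smul_set_mono hfacesub
  -- the projection properties
  have hex : ∃ y, y ∈ K ∧ ∀ z ∈ K, dist c y ≤ dist c z := by
    obtain ⟨y, hyK, hy⟩ := hKcpt.exists_isMinOn hKne (continuous_dist.comp
      (continuous_const.prodMk continuous_id)).continuousOn
    exact ⟨y, hyK, fun z hz => hy hz⟩
  have hspec : c' ∈ K ∧ ∀ z ∈ K, dist c c' ≤ dist c z := by
    rw [hc']; exact Classical.epsilon_spec hex
  have hvar : ∀ y ∈ K, (inner ℝ (c - c') (y - c') : ℝ) ≤ 0 :=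
    proj_inner_le K c c' hKconv hspec
  have hc'A : c' ∈ A := intrinsicInterior_subset hrel
  -- within-block equality
  have heq : ∀ k : Fin s, ∀ j ∈ J.blocks k, ∀ j' ∈ J.blocks k, c j - c' j = c j' - c' j' := by
    intro k j hj j' hj'
    by_cases hjj' : j = j'
    · rw [hjj']
    set D := EuclideanSpace.single j (1:ℝ) - EuclideanSpace.single j' 1 with hD
    obtain ⟨u₀, hu₀, hcu₀⟩ := Set.mem_smul_set.mp hc'A
    have hVne : {x | ∃ π : Equiv.Perm (Fin q), compatiblePerm J π ∧ x = vertexPoint q π}.Nonempty :=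
      convexHull_nonempty_iff.mp ⟨u₀, hu₀⟩
    obtain ⟨x₀, π₀, hπ₀, hx₀⟩ := hVne
    set a := π₀.symm j with ha'
    set b := π₀.symm j' with hb'
    have hπa : π₀ a = j := Equiv.apply_symm_apply π₀ j
    have hπb : π₀ b = j' := Equiv.apply_symm_apply π₀ j'
    have haR := (hπ₀ k a).mp (by rw [hπa]; exact hj)
    have hbR := (hπ₀ k b).mp (by rw [hπb]; exact hj')
    have habne : a ≠ b := fun h => hjj' (by rw [← hπa, ← hπb, h])
    have hcompat' := swap_compatible J π₀ hπ₀ k a b haR hbR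
    have hvmem : κ • vertexPoint q π₀ ∈ A :=
      Set.smul_mem_smul_set (subset_convexHull ℝ _ ⟨π₀, hπ₀, rfl⟩)
    have hv'mem : κ • vertexPoint q ((Equiv.swap a b).trans π₀) ∈ A :=
      Set.smul_mem_smul_set (subset_convexHull ℝ _ ⟨_, hcompat', rfl⟩)
    set μ := κ * (((b:ℕ):ℝ) - ((a:ℕ):ℝ)) with hμ
    have hba : ((b:ℕ):ℝ) ≠ ((a:ℕ):ℝ) := by
      have : (b:ℕ) ≠ (a:ℕ) := fun h => habne (Fin.ext h.symm)
      exact_mod_cast this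
    have hμne : μ ≠ 0 := mul_ne_zero (ne_of_gt hκ) (sub_ne_zero.mpr hba)
    have hdiffv : κ • vertexPoint q ((Equiv.swap a b).trans π₀) - κ • vertexPoint q π₀
        = μ • D := by
      rw [vertexPoint_swap π₀ a b habne, hπa, hπb, ← hD, smul_add, hμ, mul_smul]
      abel
    set W := affineSpan ℝ A with hW
    have hdW : D ∈ W.direction := by
      have h1 := AffineSubspace.vsub_mem_direction
        (subset_affineSpan ℝ A hv'mem) (subset_affineSpan ℝ A hvmem)
      have h2 : D = μ⁻¹ • (κ • vertexPoint q ((Equiv.swap a b).trans π₀)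
          -ᵥ κ • vertexPoint q π₀) := by
        rw [vsub_eq_sub, hdiffv, smul_smul, inv_mul_cancel₀ hμne, one_smul]
      rw [h2]
      exact W.direction.smul_mem _ h1
    have hc'W : c' ∈ W := subset_affineSpan ℝ A hc'A
    obtain ⟨y, hy, hyc⟩ := mem_intrinsicInterior.mp hrel
    set g : ℝ → W := fun t => ⟨c' + t • D, by
      have h := AffineSubspace.vadd_mem_of_mem_direction (W.direction.smul_mem t hdW) hc'W
      simpa [vadd_eq_add, add_comm] using h⟩ with hg
    have hgc : Continuous g :=
      Continuous.subtype_mk (continuous_const.add (continuous_id.smul continuous_const)) _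
    have h0 : (0:ℝ) ∈ g ⁻¹' (interior (Subtype.val ⁻¹' A)) := by
      have hgy : g 0 = y := Subtype.ext (by simp [hg, hyc])
      simp only [Set.mem_preimage, hgy]
      exact hy
    obtain ⟨ε, hε, hball⟩ := Metric.isOpen_iff.mp (isOpen_interior.preimage hgc) 0 h0
    have hmem : ∀ t : ℝ, |t| < ε → c' + t • D ∈ K := by
      intro t ht
      have h1 : g t ∈ interior (Subtype.val ⁻¹' A) :=
        hball (by simpa [Real.dist_eq] using ht)
      have h2 : g t ∈ Subtype.val ⁻¹' A := interior_subset h1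
      exact hAK h2
    have hcan : ∀ t : ℝ, c' + t • D - c' = t • D := fun t => by abel
    have hp := hvar _ (hmem (ε/2) (by rw [abs_of_pos (by linarith)]; linarith))
    have hm := hvar _ (hmem (-(ε/2)) (by rw [abs_neg, abs_of_pos (by linarith)]; linarith))
    rw [hcan, real_inner_smul_right] at hp hm
    have hzero : (inner ℝ (c - c') D : ℝ) = 0 := by nlinarith
    rw [hD, inner_single_diff] at hzero
    simp only [PiLp.sub_apply] at hzero
    linarith
  -- cross-block inequality
  have hcross : ∀ k l : Fin s, k < l → ∀ j ∈ J.blocks k, ∀ j' ∈ J.blocks l,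
      c j - c' j ≤ c j' - c' j' := by
    intro k l hkl j hj j' hj'
    obtain ⟨u, huface, hcu⟩ := Set.mem_smul_set.mp hc'A
    have hjj' : j ≠ j' := by
      intro h
      exact (Finset.disjoint_left.mp (J.disjoint k l (ne_of_lt hkl)) hj) (h ▸ hj')
    set D := EuclideanSpace.single j (1:ℝ) - EuclideanSpace.single j' 1 with hD
    have hS : face q s J ⊆ {x | x ∈ permutohedron q ∧ x + D ∈ permutohedron q} := by
      apply convexHull_min
      · rintro x ⟨π, hπ, rfl⟩
        refine ⟨subset_convexHull ℝ _ ⟨π, rfl⟩, ?_⟩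
        set a := π.symm j with ha'
        set b := π.symm j' with hb'
        have hπa : π a = j := Equiv.apply_symm_apply π j
        have hπb : π b = j' := Equiv.apply_symm_apply π j'
        have haR := (hπ k a).mp (by rw [hπa]; exact hj)
        have hbR := (hπ l b).mp (by rw [hπb]; exact hj')
        have hstep : cumCard J ((k:ℕ)+1) ≤ cumCard J (l:ℕ) :=
          cumCard_mono J (by exact_mod_cast hkl)
        have hab : (a:ℕ) < (b:ℕ) := by omega
        have habne : a ≠ b := by
          intro h
          rw [h] at hab
          omega
        have hv' : vertexPoint q ((Equiv.swap a b).trans π) ∈ permutohedron q :=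
          subset_convexHull ℝ _ ⟨_, rfl⟩
        rw [vertexPoint_swap π a b habne, hπa, hπb, ← hD] at hv'
        set μ := ((b:ℕ):ℝ) - ((a:ℕ):ℝ) with hμ
        have hμ1 : (1:ℝ) ≤ μ := by
          have : ((a:ℕ):ℝ) + 1 ≤ ((b:ℕ):ℝ) := by exact_mod_cast hab
          rw [hμ]; linarith
        have hμ0 : (0:ℝ) < μ := by linarith
        have hinv : μ⁻¹ ≤ 1 := by
          rw [← one_div]
          exact (div_le_one hμ0).mpr hμ1
        have hx : vertexPoint q π ∈ permutohedron q := subset_convexHull ℝ _ ⟨π, rfl⟩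
        have key : vertexPoint q π + D =
            (1 - μ⁻¹) • vertexPoint q π + μ⁻¹ • (vertexPoint q π + μ • D) := by
          rw [smul_add, smul_smul, inv_mul_cancel₀ (ne_of_gt hμ0), one_smul, ← add_assoc,
            ← add_smul]
          simp
        show vertexPoint q π + D ∈ permutohedron q
        rw [key]
        exact hPconv hx hv' (by linarith) (le_of_lt (inv_pos.mpr hμ0)) (by ring)
      · intro x hx y hy α β hα hβ hαβ
        refine ⟨hPconv hx.1 hy.1 hα hβ hαβ, ?_⟩
        have hsum : α • (x + D) + β • (y + D) = α • x + β • y + (α + β) • D := by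
          rw [smul_add, smul_add, add_smul]
          abel
        rw [hαβ, one_smul] at hsum
        show α • x + β • y + D ∈ permutohedron q
        rw [← hsum]
        exact hPconv hx.2 hy.2 hα hβ hαβ
    have hud : u + D ∈ permutohedron q := (hS huface).2
    have hyK : κ • (u + D) ∈ K := Set.smul_mem_smul_set hud
    have hvv := hvar _ hyK
    have hdiff : κ • (u + D) - c' = κ • D := by
      rw [← hcu, smul_add]
      abel
    rw [hdiff, real_inner_smul_right] at hvv
    have hinnerle : (inner ℝ (c - c') D : ℝ) ≤ 0 := by nlinarith
    rw [hD, inner_single_diff] at hinnerle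
    simp only [PiLp.sub_apply] at hinnerle
    linarith
  -- conclude
  refine ⟨fun k => c ((J.nonempty k).choose) - c' ((J.nonempty k).choose), ?_, ?_⟩
  · intro k l hkl
    rcases eq_or_lt_of_le hkl with h | h
    · rw [h]
    · exact hcross k l h _ (J.nonempty k).choose_spec _ (J.nonempty l).choose_spec
  · intro k j hj
    exact heq k j hj _ (J.nonempty k).choose_spec

end
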